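/- Let s ≥ 1 and let α_{i,j} ≥ 0, β_{i,j} ≥ 0 (1 ≤ i ≤ s, 0 ≤ j ≤ i−1) satisfy Σ_{j=0}^{i−1} α_{i,j} = 1 for each i and β_{i,j} = 0 whenever α_{i,j} = 0, and let abscissas satisfy 0 = c_0 ≤ c_1 ≤ ⋯ ≤ c_s (non-decreasing). Suppose L satisfies the exponential monotonicity condition and N satisfies the forward-Euler condition with step bound h_FE > 0. Given u^n ∈ E and Δt ≥ 0 with β_{i,j} Δt ≤ α_{i,j} h_FE for all i, j (i.e. Δt ≤ C h_FE with C = min_{β_{i,j}≠0} α_{i,j}/β_{i,j}), define the integrating factor Runge–Kutta step by u^{(0)} = u^n, u^{(i)} = Σ_{j=0}^{i−1} exp((c_i − c_j) Δt • L)(α_{i,j} • u^{(j)} + (Δt β_{i,j}) • N(u^{(j)})) for i = 1, …, s, and u^{n+1} = u^{(s)}. Then f(u^{n+1}) ≤ f(u^n). -/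

import Mathlib

/-- **SSP integrating factor Runge–Kutta methods with non-decreasing abscissas.**
If the explicit Runge–Kutta method in Shu–Osher form (coefficients `α, β ≥ 0`,
row sums of `α` equal to `1`, `β i j = 0` whenever `α i j = 0`) has non-decreasing
abscissas `0 = c 0 ≤ c 1 ≤ ⋯ ≤ c s`, `L` satisfies the exponential monotonicity
condition, `N` satisfies the forward-Euler condition with step bound `hFE > 0`,
and `β i j * Δt ≤ α i j * hFE` for all stages, then the integrating factor
Runge–Kutta step is strongly stable: `f (U s) ≤ f uⁿ`. -/
theorem ssp_integratingFactor_rungeKutta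
    {E : Type*} [NormedAddCommGroup E] [NormedSpace ℝ E] [FiniteDimensional ℝ E]
    (f : E → ℝ) (hf_cont : Continuous f) (hf_conv : ConvexOn ℝ Set.univ f)
    (L : E →L[ℝ] E) (N : E → E)
    (hFE : ℝ) (hFE_pos : 0 < hFE)
    (hL : ∀ (τ : ℝ), 0 ≤ τ → ∀ u : E, f (NormedSpace.exp (τ • L) u) ≤ f u)
    (hN : ∀ u : E, ∀ τ : ℝ, 0 ≤ τ → τ ≤ hFE → f (u + τ • N u) ≤ f u)
    (s : ℕ) (hs : 1 ≤ s)
    (α β : ℕ → ℕ → ℝ)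
    (hα_nonneg : ∀ i j, 1 ≤ i → i ≤ s → j < i → 0 ≤ α i j)
    (hβ_nonneg : ∀ i j, 1 ≤ i → i ≤ s → j < i → 0 ≤ β i j)
    (hα_sum : ∀ i, 1 ≤ i → i ≤ s → ∑ j ∈ Finset.range i, α i j = 1)
    (hβ_zero : ∀ i j, 1 ≤ i → i ≤ s → j < i → α i j = 0 → β i j = 0)
    (c : ℕ → ℝ) (hc0 : c 0 = 0) (hc_mono : ∀ j, j < s → c j ≤ c (j + 1))
    (un : E) (Δt : ℝ) (hΔt : 0 ≤ Δt)
    (hstep : ∀ i j, 1 ≤ i → i ≤ s → j < i → β i j * Δt ≤ α i j * hFE)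
    (U : ℕ → E) (hU0 : U 0 = un)
    (hU : ∀ i, 1 ≤ i → i ≤ s →
      U i = ∑ j ∈ Finset.range i,
        NormedSpace.exp (((c i - c j) * Δt) • L)
          (α i j • U j + (Δt * β i j) • N (U j))) :
    f (U s) ≤ f un := by
  have cmono : ∀ a b : ℕ, a ≤ b → b ≤ s → c a ≤ c b := by
    intro a b hab hbs
    induction b, hab using Nat.le_induction with
    | base => exact le_rfl
    | succ b hb ih =>
        exact le_trans (ih (le_trans (Nat.le_succ b) hbs))
          (hc_mono b (Nat.lt_of_succ_le hbs))
  have key : ∀ i, i ≤ s → f (U i) ≤ f un := by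
    intro i
    induction i using Nat.strong_induction_on with
    | _ i ih =>
      intro his
      rcases Nat.eq_zero_or_pos i with h0 | hi1
      · rw [h0, hU0]
      · -- define modified stage values
        set v : ℕ → E := fun j =>
          if α i j = 0 then un
          else NormedSpace.exp (((c i - c j) * Δt) • L)
            (U j + (Δt * β i j / α i j) • N (U j)) with hv
        have hUi : U i = ∑ j ∈ Finset.range i, α i j • v j := by
          rw [hU i hi1 his]
          refine Finset.sum_congr rfl ?_
          intro j hj
          rw [Finset.mem_range] at hj
          by_cases hz : α i j = 0
          · have hbz : β i j = 0 := hβ_zero i j hi1 his hj hz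
            simp [hv, hz, hbz]
          · have : α i j • U j + (Δt * β i j) • N (U j)
                = α i j • (U j + (Δt * β i j / α i j) • N (U j)) := by
              rw [smul_add, smul_smul]
              field_simp
            rw [this, map_smul]
            simp [hv, hz]
        have hsum : ∑ j ∈ Finset.range i, α i j = 1 := hα_sum i hi1 his
        have hw : ∀ j ∈ Finset.range i, 0 ≤ α i j := fun j hj =>
          hα_nonneg i j hi1 his (Finset.mem_range.mp hj)
        have hmem : ∀ j ∈ Finset.range i, v j ∈ (Set.univ : Set E) :=
          fun _ _ => Set.mem_univ _
        have hfv : ∀ j ∈ Finset.range i, f (v j) ≤ f un := by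
          intro j hj
          rw [Finset.mem_range] at hj
          have hjs : j ≤ s := le_trans (Nat.le_of_lt hj) his
          have hUj : f (U j) ≤ f un := ih j hj hjs
          by_cases hz : α i j = 0
          · simp [hv, hz]
          · have hapos : 0 < α i j := lt_of_le_of_ne (hα_nonneg i j hi1 his hj) (Ne.symm hz)
            have hτ : 0 ≤ (c i - c j) * Δt :=
              mul_nonneg (sub_nonneg.mpr (cmono j i (Nat.le_of_lt hj) his)) hΔt
            have hτ'0 : 0 ≤ Δt * β i j / α i j :=
              div_nonneg (mul_nonneg hΔt (hβ_nonneg i j hi1 his hj)) hapos.le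
            have hτ'1 : Δt * β i j / α i j ≤ hFE := by
              rw [div_le_iff₀ hapos]
              calc Δt * β i j = β i j * Δt := mul_comm _ _
                _ ≤ α i j * hFE := hstep i j hi1 his hj
                _ = hFE * α i j := mul_comm _ _
            calc f (v j) = f (NormedSpace.exp (((c i - c j) * Δt) • L)
                  (U j + (Δt * β i j / α i j) • N (U j))) := by simp [hv, hz]
              _ ≤ f (U j + (Δt * β i j / α i j) • N (U j)) := hL _ hτ _
              _ ≤ f (U j) := hN _ _ hτ'0 hτ'1
              _ ≤ f un := hUj
        calc f (U i) = f (∑ j ∈ Finset.range i, α i j • v j) := by rw [hUi]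
          _ ≤ ∑ j ∈ Finset.range i, α i j * f (v j) :=
              hf_conv.map_sum_le hw hsum hmem
          _ ≤ ∑ j ∈ Finset.range i, α i j * f un := by
              refine Finset.sum_le_sum ?_
              intro j hj
              exact mul_le_mul_of_nonneg_left (hfv j hj) (hw j hj)
          _ = f un := by rw [← Finset.sum_mul, hsum, one_mul]
  exact key s le_rfl
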